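/- Let p : ℝ^d → ℝ^m be a polynomial map with p(0) = 0 given by polynomials p₁,…,p_m. The restriction of M_p to T^{≥1}(ℝ^m) is a half-shuffle (Zinbiel) homomorphism, i.e. M_p(x ≻ y) = M_p(x) ≻ M_p(y) for all x, y ∈ T^{≥1}(ℝ^m), and it is the unique half-shuffle homomorphism (T^{≥1}(ℝ^m), ≻) → (T^{≥1}(ℝ^d), ≻) satisfying M_p(i) = φ_d(p_i) for every letter i ∈ {1,…,m}. -/

import Mathlib

noncomputable section

open MeasureTheory

/-- Words in the alphabet `{1,…,d}`. -/
abbrev Word (d : ℕ) := List (Fin d)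

/-- `T(ℝ^d)`: the real vector space with basis the words in `{1,…,d}`. -/
abbrev Tens (d : ℕ) := Word d →₀ ℝ

namespace SigPaper

variable {d m s : ℕ}

/-- The basis word `w` as an element of `T(ℝ^d)`. -/
def wordT (w : Word d) : Tens d := Finsupp.single w 1

/-- The shuffle product of two words. -/
def shuffleWord : Word d → Word d → Tens d
  | [], v => Finsupp.single v 1
  | u, [] => Finsupp.single u 1
  | a :: u, b :: v =>
      Finsupp.mapDomain (fun w => a :: w) (shuffleWord u (b :: v)) +
      Finsupp.mapDomain (fun w => b :: w) (shuffleWord (a :: u) v)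
  termination_by u v => u.length + v.length
  decreasing_by all_goals simp +arith +decide

/-- The shuffle product `⧢` on `T(ℝ^d)`, the bilinear extension of the shuffle of words. -/
def shuffle (x y : Tens d) : Tens d :=
  x.sum fun u a => y.sum fun v b => (a * b) • shuffleWord u v

/-- The operator appending the letter `i` at the end of every word (`T_i^+`). -/
def appendLetter (i : Fin d) (x : Tens d) : Tens d :=
  Finsupp.mapDomain (fun w => w ++ [i]) x

/-- The right half-shuffle of two words: `w ≻ (v∘i) = (w ⧢ v)∘i` (zero if the right word
is empty). -/
def halfShuffleWord (u v : Word d) : Tens d :=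
  match v.getLast? with
  | none => 0
  | some i => appendLetter i (shuffleWord u v.dropLast)

/-- The right half-shuffle `≻`, extended bilinearly. -/
def halfShuffle (x y : Tens d) : Tens d :=
  x.sum fun u a => y.sum fun v b => (a * b) • halfShuffleWord u v

/-- The letter-appending operator `T_i^+`. -/
def Tplus (i : Fin d) : Tens d → Tens d := appendLetter i

/-- `T_i^-` on a word: removes the last letter if it equals `i`, otherwise `0`. -/
def TminusWord (i : Fin d) (w : Word d) : Tens d :=
  match w.getLast? with
  | none => 0
  | some j => if j = i then Finsupp.single w.dropLast 1 else 0

/-- The letter-removing operator `T_i^-`. -/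
def Tminus (i : Fin d) (x : Tens d) : Tens d := x.sum fun w a => a • TminusWord i w

/-- The single-letter word `i` in `T(ℝ^d)`. -/
def letterT (i : Fin d) : Tens d := Finsupp.single [i] 1

/-- Shuffle powers `x^{⧢ n}`. -/
def shufflePow (x : Tens d) : ℕ → Tens d
  | 0 => Finsupp.single [] 1
  | n + 1 => shuffle (shufflePow x n) x

/-- Shuffle product of a list of elements. -/
def shuffleList : List (Tens d) → Tens d
  | [] => Finsupp.single [] 1
  | x :: xs => shuffle x (shuffleList xs)

/-- Image of the monomial `x^t` under `φ_d`: the shuffle product of its letters. -/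
def phiMon (t : Fin d →₀ ℕ) : Tens d :=
  shuffleList ((List.finRange d).map fun i => shufflePow (letterT i) (t i))

/-- The embedding `φ_d : ℝ[x₁,…,x_d] → (T(ℝ^d), ⧢)` sending the monomial
`x_{i₁}⋯x_{i_l}` to `i₁ ⧢ ⋯ ⧢ i_l`. -/
def phi (f : MvPolynomial (Fin d) ℝ) : Tens d :=
  f.support.sum fun t => f.coeff t • phiMon t

/-- A polynomial map `p : ℝ^d → ℝ^m`, given by `m` polynomials in `d` variables. -/
abbrev PolyMap (d m : ℕ) := Fin m → MvPolynomial (Fin d) ℝ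

/-- `k_p^{ij} = φ_d(∂p_i/∂x_j) ∈ T(ℝ^d)`. -/
def kP (p : PolyMap d m) (i : Fin m) (j : Fin d) : Tens d :=
  phi (MvPolynomial.pderiv j (p i))

/-- Auxiliary: `M_p` on reversed words, so that `M_p(e) = e` and
`M_p(w∘i) = Σ_j (M_p(w) ⧢ k_p^{ij})∘j`. -/
def MpRev (p : PolyMap d m) : List (Fin m) → Tens d
  | [] => Finsupp.single [] 1
  | i :: w => ∑ j : Fin d, appendLetter j (shuffle (MpRev p w) (kP p i j))

/-- `M_p` on a word. -/
def MpWord (p : PolyMap d m) (w : Word m) : Tens d := MpRev p w.reverse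

/-- The linear map `M_p : T(ℝ^m) → T(ℝ^d)`. -/
def Mp (p : PolyMap d m) (x : Tens m) : Tens d := x.sum fun w a => a • MpWord p w

/-- `X : [0,L] → ℝ^d` is piecewise continuously differentiable: there is a partition
`0 = t₀ ≤ t₁ ≤ ⋯ ≤ t_n = L` such that `X` is `C¹` on each subinterval. -/
def PiecewiseC1 (X : ℝ → Fin d → ℝ) (L : ℝ) : Prop :=
  ∃ (n : ℕ) (t : Fin (n + 1) → ℝ), Monotone t ∧ t 0 = 0 ∧ t (Fin.last n) = L ∧
    ∀ k : Fin n, ContDiffOn ℝ 1 X (Set.Icc (t k.castSucc) (t k.succ))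

/-- Iterated-integral signature coefficients, on reversed words:
`⟨σ(X|_{[0,t]}), w∘i⟩ = ∫_0^t ⟨σ(X|_{[0,r]}), w⟩ Ẋ^i_r dr`. -/
def sigRev (X : ℝ → Fin d → ℝ) : List (Fin d) → ℝ → ℝ
  | [], _ => 1
  | i :: w, t => ∫ r in (0:ℝ)..t, sigRev X w r * deriv (fun u => X u i) r

/-- `⟨σ(X|_{[0,L]}), w⟩`, the signature coefficient of the word `w`. -/
def sigWord (X : ℝ → Fin d → ℝ) (L : ℝ) (w : Word d) : ℝ := sigRev X w.reverse L

/-- The pairing `⟨σ(X|_{[0,L]}), x⟩` for `x ∈ T(ℝ^d)`. -/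
def sigT (X : ℝ → Fin d → ℝ) (L : ℝ) (x : Tens d) : ℝ :=
  x.sum fun w a => a * sigWord X L w

/-- The transformed path `p(X) : t ↦ p(X(t))`. -/
def pPath (p : PolyMap d m) (X : ℝ → Fin d → ℝ) : ℝ → Fin m → ℝ :=
  fun t i => MvPolynomial.eval (X t) (p i)

/-- The translated polynomial map `p̃(y) = p(y + x₀) − p(x₀)`, satisfying `p̃(0) = 0`. -/
def ptilde (p : PolyMap d m) (x0 : Fin d → ℝ) : PolyMap d m := fun i =>
  MvPolynomial.aeval (fun j => MvPolynomial.X j + MvPolynomial.C (x0 j)) (p i) -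
    MvPolynomial.C (MvPolynomial.eval x0 (p i))

/-- The pairing `⟨exp_∘(L·𝟙), x⟩` for `x ∈ T(ℝ¹)`: the coefficient of the word of
length `n` in `exp_∘(L·𝟙)` is `Lⁿ/n!`. -/
def expPair (L : ℝ) (x : Tens 1) : ℝ :=
  x.sum fun w a => a * (L ^ w.length / (w.length.factorial : ℝ))

/-- The pairing `⟨σ(X) ∘ σ(Y), x⟩` of the concatenation product of two signatures with
`x ∈ T(ℝ^d)`: on a word `w` it is `Σ_{u∘v = w} ⟨σ(X), u⟩·⟨σ(Y), v⟩`. -/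
def concatPair (X Y : ℝ → Fin d → ℝ) (L : ℝ) (x : Tens d) : ℝ :=
  x.sum fun w a =>
    a * ∑ k ∈ Finset.range (w.length + 1), sigWord X L (w.take k) * sigWord Y L (w.drop k)



lemma shuffleWord_nil_left (v : Word d) : shuffleWord ([]:Word d) v = Finsupp.single v 1 := by
  cases v <;> simp [shuffleWord]

lemma shuffleWord_nil_right (u : Word d) : shuffleWord u ([]:Word d) = Finsupp.single u 1 := by
  cases u <;> simp [shuffleWord]

lemma shuffleWord_cons_cons (a b : Fin d) (u v : Word d) : shuffleWord (a::u) (b::v) =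
    Finsupp.mapDomain (fun w => a :: w) (shuffleWord u (b :: v)) +
    Finsupp.mapDomain (fun w => b :: w) (shuffleWord (a :: u) v) := by
  rw [shuffleWord]

/-- shuffle as a bilinear map -/
def shuffleL : Tens d →ₗ[ℝ] Tens d →ₗ[ℝ] Tens d :=
  Finsupp.lsum ℝ fun u => LinearMap.toSpanSingleton ℝ _
    (Finsupp.lsum ℝ fun v => LinearMap.toSpanSingleton ℝ (Tens d) (shuffleWord u v))

lemma shuffle_eq (x y : Tens d) : shuffle x y = shuffleL x y := by
  classical
  simp only [shuffle, shuffleL, Finsupp.lsum_apply, Finsupp.sum, LinearMap.coe_sum,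
    Finset.sum_apply, LinearMap.smul_apply, LinearMap.toSpanSingleton_apply,
    Finset.smul_sum, smul_smul]

@[simp] lemma shuffle_zero_left (y : Tens d) : shuffle 0 y = 0 := by
  simp [shuffle_eq]
@[simp] lemma shuffle_zero_right (x : Tens d) : shuffle x 0 = 0 := by
  simp [shuffle_eq]
lemma shuffle_add_left (x x' y : Tens d) : shuffle (x + x') y = shuffle x y + shuffle x' y := by
  simp [shuffle_eq]
lemma shuffle_add_right (x y y' : Tens d) : shuffle x (y + y') = shuffle x y + shuffle x y' := by
  simp [shuffle_eq]
lemma shuffle_smul_left (c : ℝ) (x y : Tens d) : shuffle (c • x) y = c • shuffle x y := by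
  simp [shuffle_eq]
lemma shuffle_smul_right (c : ℝ) (x y : Tens d) : shuffle x (c • y) = c • shuffle x y := by
  simp [shuffle_eq]

lemma shuffle_single_single (u v : Word d) (a b : ℝ) :
    shuffle (Finsupp.single u a) (Finsupp.single v b) = (a * b) • shuffleWord u v := by
  simp [shuffle_eq, shuffleL, Finsupp.lsum_single, smul_smul]

lemma shuffle_wordT (u v : Word d) : shuffle (wordT u) (wordT v) = shuffleWord u v := by
  simp [wordT, shuffle_single_single]


lemma shuffle_mapcons (a b : Fin d) (x y : Tens d) :
    shuffle (Finsupp.mapDomain (fun w : Word d => a :: w) x)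
        (Finsupp.mapDomain (fun w : Word d => b :: w) y) =
      Finsupp.mapDomain (fun w : Word d => a :: w)
          (shuffle x (Finsupp.mapDomain (fun w : Word d => b :: w) y)) +
        Finsupp.mapDomain (fun w : Word d => b :: w)
          (shuffle (Finsupp.mapDomain (fun w : Word d => a :: w) x) y) := by
  induction x using Finsupp.induction_linear with
  | zero => simp
  | add f g hf hg =>
      simp only [Finsupp.mapDomain_add, shuffle_add_left, hf, hg]
      abel
  | single u c =>
      induction y using Finsupp.induction_linear with
      | zero => simp
      | add f g hf hg =>
          simp only [Finsupp.mapDomain_add, shuffle_add_right, hf, hg]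
          abel
      | single v e =>
          simp only [Finsupp.mapDomain_single, shuffle_single_single,
            shuffleWord_cons_cons, Finsupp.mapDomain_smul, smul_add]

lemma shuffle_empty_left (y : Tens d) : shuffle (Finsupp.single ([]:Word d) 1) y = y := by
  induction y using Finsupp.induction_linear with
  | zero => simp
  | add f g hf hg => rw [shuffle_add_right, hf, hg]
  | single v b =>
      rw [shuffle_single_single, shuffleWord_nil_left, one_mul, Finsupp.smul_single, smul_eq_mul,
        mul_one]

lemma shuffle_empty_right (x : Tens d) : shuffle x (Finsupp.single ([]:Word d) 1) = x := by
  induction x using Finsupp.induction_linear with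
  | zero => simp
  | add f g hf hg => rw [shuffle_add_left, hf, hg]
  | single v b =>
      rw [shuffle_single_single, shuffleWord_nil_right, mul_one, Finsupp.smul_single, smul_eq_mul,
        mul_one]

lemma shuffleWord_comm : ∀ u v : Word d, shuffleWord u v = shuffleWord v u
  | [], v => by rw [shuffleWord_nil_left, shuffleWord_nil_right]
  | u, [] => by rw [shuffleWord_nil_left, shuffleWord_nil_right]
  | a::u, b::v => by
      rw [shuffleWord_cons_cons a b u v, shuffleWord_cons_cons b a v u,
        shuffleWord_comm u (b::v), shuffleWord_comm (a::u) v, add_comm]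
  termination_by u v => u.length + v.length
  decreasing_by all_goals simp +arith +decide

lemma shuffle_comm (x y : Tens d) : shuffle x y = shuffle y x := by
  induction x using Finsupp.induction_linear with
  | zero => simp
  | add f g hf hg => rw [shuffle_add_left, shuffle_add_right, hf, hg]
  | single u a =>
      induction y using Finsupp.induction_linear with
      | zero => simp
      | add f g hf hg => rw [shuffle_add_left, shuffle_add_right, hf, hg]
      | single v b => rw [shuffle_single_single, shuffle_single_single, shuffleWord_comm,
          mul_comm]

lemma wordT_cons (a : Fin d) (w : Word d) :
    wordT (a :: w) = Finsupp.mapDomain (fun t : Word d => a :: t) (wordT w) := by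
  simp [wordT, Finsupp.mapDomain_single]

lemma shuffle_assoc_word : ∀ u v w : Word d,
    shuffle (shuffleWord u v) (wordT w) = shuffle (wordT u) (shuffleWord v w)
  | [], v, w => by
      rw [shuffleWord_nil_left]
      show shuffle (wordT v) (wordT w) = _
      rw [shuffle_wordT]
      show _ = shuffle (Finsupp.single ([]:Word d) 1) _
      rw [shuffle_empty_left]
  | a::u, [], w => by
      rw [shuffleWord_nil_right, shuffleWord_nil_left]
      show shuffle (wordT (a::u)) (wordT w) = shuffle (wordT (a::u)) (wordT w)
      rfl
  | a::u, b::v, [] => by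
      rw [shuffleWord_nil_right]
      show shuffle _ (Finsupp.single ([]:Word d) 1) = _
      rw [shuffle_empty_right]
      show _ = shuffle (wordT (a::u)) (wordT (b::v))
      rw [shuffle_wordT]
  | a::u, b::v, c::w => by
      have IH1 := shuffle_assoc_word u (b::v) (c::w)
      have IH2 := shuffle_assoc_word (a::u) v (c::w)
      have IH3 := shuffle_assoc_word (a::u) (b::v) w
      rw [shuffleWord_cons_cons a b u v, wordT_cons c w, shuffle_add_left,
        shuffle_mapcons, shuffle_mapcons, ← wordT_cons c w,
        shuffleWord_cons_cons b c v w, wordT_cons a u, shuffle_add_right,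
        shuffle_mapcons, shuffle_mapcons, ← wordT_cons a u]
      rw [IH1, IH2, ← IH3]
      simp only [shuffleWord_cons_cons a b u v, shuffleWord_cons_cons b c v w,
        shuffle_add_left, shuffle_add_right, Finsupp.mapDomain_add]
      abel
  termination_by u v w => u.length + v.length + w.length
  decreasing_by all_goals simp +arith +decide

lemma single_eq_smul_wordT (w : Word d) (a : ℝ) : Finsupp.single w a = a • wordT w := by
  simp [wordT, Finsupp.smul_single]

lemma shuffle_assoc (x y z : Tens d) : shuffle (shuffle x y) z = shuffle x (shuffle y z) := by
  induction x using Finsupp.induction_linear with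
  | zero => simp
  | add f g hf hg => rw [shuffle_add_left, shuffle_add_left, hf, hg, shuffle_add_left]
  | single u a =>
    induction y using Finsupp.induction_linear with
    | zero => simp
    | add f g hf hg =>
        simp only [shuffle_add_left, shuffle_add_right]
        rw [hf, hg]
    | single v b =>
      induction z using Finsupp.induction_linear with
      | zero => simp
      | add f g hf hg =>
          simp only [shuffle_add_left, shuffle_add_right]
          rw [hf, hg]
      | single w c =>
        rw [shuffle_single_single, shuffle_single_single v w, shuffle_smul_left,
          shuffle_smul_right, single_eq_smul_wordT w c, single_eq_smul_wordT u a,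
          shuffle_smul_right, shuffle_smul_left, shuffle_assoc_word, smul_smul, smul_smul]
        congr 1
        ring

lemma shuffle_single_nil_left (a : ℝ) (z : Tens d) :
    shuffle (Finsupp.single ([]:Word d) a) z = a • z := by
  rw [single_eq_smul_wordT, shuffle_smul_left]
  show a • shuffle (Finsupp.single ([]:Word d) 1) z = a • z
  rw [shuffle_empty_left]

lemma shuffle_single_nil_right (a : ℝ) (z : Tens d) :
    shuffle z (Finsupp.single ([]:Word d) a) = a • z := by
  rw [shuffle_comm, shuffle_single_nil_left]

/-- halfShuffle as a bilinear map -/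
def halfShuffleL : Tens d →ₗ[ℝ] Tens d →ₗ[ℝ] Tens d :=
  Finsupp.lsum ℝ fun u => LinearMap.toSpanSingleton ℝ _
    (Finsupp.lsum ℝ fun v => LinearMap.toSpanSingleton ℝ (Tens d) (halfShuffleWord u v))

lemma halfShuffle_eq (x y : Tens d) : halfShuffle x y = halfShuffleL x y := by
  classical
  simp only [halfShuffle, halfShuffleL, Finsupp.lsum_apply, Finsupp.sum, LinearMap.coe_sum,
    Finset.sum_apply, LinearMap.smul_apply, LinearMap.toSpanSingleton_apply,
    Finset.smul_sum, smul_smul]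

@[simp] lemma halfShuffle_zero_left (y : Tens d) : halfShuffle 0 y = 0 := by
  simp [halfShuffle_eq]
@[simp] lemma halfShuffle_zero_right (x : Tens d) : halfShuffle x 0 = 0 := by
  simp [halfShuffle_eq]
lemma halfShuffle_add_left (x x' y : Tens d) :
    halfShuffle (x + x') y = halfShuffle x y + halfShuffle x' y := by simp [halfShuffle_eq]
lemma halfShuffle_add_right (x y y' : Tens d) :
    halfShuffle x (y + y') = halfShuffle x y + halfShuffle x y' := by simp [halfShuffle_eq]
lemma halfShuffle_smul_left (c : ℝ) (x y : Tens d) :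
    halfShuffle (c • x) y = c • halfShuffle x y := by simp [halfShuffle_eq]
lemma halfShuffle_smul_right (c : ℝ) (x y : Tens d) :
    halfShuffle x (c • y) = c • halfShuffle x y := by simp [halfShuffle_eq]
lemma halfShuffle_single_single (u v : Word d) (a b : ℝ) :
    halfShuffle (Finsupp.single u a) (Finsupp.single v b) = (a * b) • halfShuffleWord u v := by
  simp [halfShuffle_eq, halfShuffleL, Finsupp.lsum_single, smul_smul]

@[simp] lemma appendLetter_single (i : Fin d) (w : Word d) (a : ℝ) :
    appendLetter i (Finsupp.single w a) = Finsupp.single (w ++ [i]) a :=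
  Finsupp.mapDomain_single
lemma appendLetter_add (i : Fin d) (x y : Tens d) :
    appendLetter i (x + y) = appendLetter i x + appendLetter i y :=
  Finsupp.mapDomain_add
lemma appendLetter_smul (i : Fin d) (c : ℝ) (x : Tens d) :
    appendLetter i (c • x) = c • appendLetter i x :=
  Finsupp.mapDomain_smul c x
@[simp] lemma appendLetter_zero (i : Fin d) : appendLetter i (0 : Tens d) = 0 :=
  Finsupp.mapDomain_zero

lemma halfShuffleWord_concat (u v : Word d) (i : Fin d) :
    halfShuffleWord u (v ++ [i]) = appendLetter i (shuffleWord u v) := by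
  simp [halfShuffleWord, List.getLast?_concat, List.dropLast_concat]

lemma appendLetter_mapcons (i c : Fin d) (x : Tens d) :
    appendLetter i (Finsupp.mapDomain (fun w : Word d => c :: w) x) =
      Finsupp.mapDomain (fun w : Word d => c :: w) (appendLetter i x) := by
  unfold appendLetter
  rw [← Finsupp.mapDomain_comp, ← Finsupp.mapDomain_comp]
  congr 1

lemma shuffleWord_concat_concat : ∀ (u v : Word d) (a b : Fin d),
    shuffleWord (u ++ [a]) (v ++ [b]) =
      appendLetter b (shuffleWord (u ++ [a]) v) + appendLetter a (shuffleWord u (v ++ [b]))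
  | [], [], a, b => by
      simp only [List.nil_append, shuffleWord_cons_cons, shuffleWord_nil_left,
        shuffleWord_nil_right, Finsupp.mapDomain_single, appendLetter_single, List.nil_append,
        List.singleton_append]
      try abel
  | [], c::v, a, b => by
      have IH := shuffleWord_concat_concat [] v a b
      simp only [List.nil_append] at *
      rw [List.cons_append, shuffleWord_cons_cons a c [] (v ++ [b]), IH,
        shuffleWord_cons_cons a c [] v]
      simp only [shuffleWord_nil_left, Finsupp.mapDomain_add, Finsupp.mapDomain_single,
        appendLetter_add, appendLetter_single, appendLetter_mapcons, List.cons_append,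
        List.append_assoc, List.singleton_append]
      abel
  | c::u, [], a, b => by
      have IH := shuffleWord_concat_concat u [] a b
      simp only [List.nil_append] at *
      rw [List.cons_append, shuffleWord_cons_cons c b (u ++ [a]) [], IH,
        shuffleWord_cons_cons c b u []]
      simp only [shuffleWord_nil_right, Finsupp.mapDomain_add, Finsupp.mapDomain_single,
        appendLetter_add, appendLetter_single, appendLetter_mapcons, List.cons_append,
        List.append_assoc, List.singleton_append]
      try abel
  | c::u, e::v, a, b => by
      have IH1 := shuffleWord_concat_concat u (e::v) a b
      have IH2 := shuffleWord_concat_concat (c::u) v a b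
      simp only [List.cons_append] at IH1 IH2 ⊢
      rw [shuffleWord_cons_cons c e (u ++ [a]) (v ++ [b]), IH1, IH2,
        shuffleWord_cons_cons c e (u ++ [a]) v, shuffleWord_cons_cons c e u (v ++ [b])]
      simp only [Finsupp.mapDomain_add, appendLetter_add, appendLetter_mapcons,
        List.cons_append]
      abel
  termination_by u v => u.length + v.length
  decreasing_by all_goals simp +arith +decide

lemma shuffleWord_split (u v : Word d) (hu : u ≠ []) (hv : v ≠ []) :
    shuffleWord u v = halfShuffleWord u v + halfShuffleWord v u := by
  rcases (List.eq_nil_or_concat u).resolve_left hu with ⟨u', a, rfl⟩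
  rcases (List.eq_nil_or_concat v).resolve_left hv with ⟨v', b, rfl⟩
  simp only [List.concat_eq_append]
  rw [halfShuffleWord_concat, halfShuffleWord_concat, shuffleWord_concat_concat,
    shuffleWord_comm (v' ++ [b]) u']

lemma TminusWord_nil (i : Fin d) : TminusWord i ([] : Word d) = 0 := rfl

lemma TminusWord_concat (i j : Fin d) (w : Word d) :
    TminusWord i (w ++ [j]) = if j = i then Finsupp.single w 1 else 0 := by
  simp [TminusWord, List.getLast?_concat, List.dropLast_concat]

/-- Tminus as a linear map -/
def TminusLM (i : Fin d) : Tens d →ₗ[ℝ] Tens d :=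
  Finsupp.lsum ℝ fun w => LinearMap.toSpanSingleton ℝ (Tens d) (TminusWord i w)

lemma Tminus_eq (i : Fin d) (x : Tens d) : Tminus i x = TminusLM i x := by
  rw [Tminus, TminusLM, Finsupp.lsum_apply]
  exact Finsupp.sum_congr fun w _ => by rw [LinearMap.toSpanSingleton_apply]

@[simp] lemma Tminus_zero (i : Fin d) : Tminus i (0 : Tens d) = 0 := by simp [Tminus_eq]
lemma Tminus_add (i : Fin d) (x y : Tens d) : Tminus i (x + y) = Tminus i x + Tminus i y := by
  simp [Tminus_eq]
lemma Tminus_smul (i : Fin d) (c : ℝ) (x : Tens d) : Tminus i (c • x) = c • Tminus i x := by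
  simp [Tminus_eq]
lemma Tminus_single (i : Fin d) (w : Word d) (a : ℝ) :
    Tminus i (Finsupp.single w a) = a • TminusWord i w := by
  simp [Tminus_eq, TminusLM, Finsupp.lsum_single]

lemma Tminus_appendLetter (i j : Fin d) (x : Tens d) :
    Tminus i (appendLetter j x) = if j = i then x else 0 := by
  induction x using Finsupp.induction_linear with
  | zero => split_ifs <;> simp
  | add f g hf hg => rw [appendLetter_add, Tminus_add, hf, hg]; split_ifs <;> simp
  | single w a =>
      rw [appendLetter_single, Tminus_single, TminusWord_concat]
      split_ifs <;> simp [Finsupp.smul_single]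

/-- induction principle for elements with zero empty-word coefficient -/
lemma induction_ne_nil {P : Tens d → Prop} (h0 : P 0)
    (hadd : ∀ x y : Tens d, P x → P y → P (x + y))
    (hs : ∀ (w : Word d) (a : ℝ), w ≠ [] → P (Finsupp.single w a)) :
    ∀ x : Tens d, x ([] : Word d) = 0 → P x := by
  intro x
  induction x using Finsupp.induction with
  | zero => intro _; exact h0
  | single_add w b f hw hb ih =>
      intro hx
      by_cases hwe : w = []
      · exfalso
        subst hwe
        have hf0 : f ([]:Word d) = 0 := Finsupp.notMem_support_iff.mp hw
        rw [Finsupp.add_apply, Finsupp.single_eq_same, hf0, add_zero] at hx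
        exact hb hx
      · have hf0 : f ([]:Word d) = 0 := by
          rw [Finsupp.add_apply, Finsupp.single_apply, if_neg hwe, zero_add] at hx
          exact hx
        exact hadd _ _ (hs w b hwe) (ih hf0)

lemma sum_appendLetter_Tminus (x : Tens d) (hx : x ([] : Word d) = 0) :
    (∑ j : Fin d, appendLetter j (Tminus j x)) = x := by
  refine induction_ne_nil (P := fun z : Tens d => (∑ j : Fin d, appendLetter j (Tminus j z)) = z) ?_ ?_ ?_ x hx
  · simp
  · intro x y hxp hyp
    simp only [Tminus_add, appendLetter_add, Finset.sum_add_distrib, hxp, hyp]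
  · intro w a hw
    rcases (List.eq_nil_or_concat w).resolve_left hw with ⟨w', i, rfl⟩
    simp only [List.concat_eq_append, Tminus_single, TminusWord_concat]
    have key : ∀ j : Fin d, appendLetter j (a • if i = j then Finsupp.single w' (1:ℝ) else 0) =
        if j = i then Finsupp.single (w' ++ [i]) a else 0 := by
      intro j
      by_cases h : i = j
      · subst h; simp [Finsupp.smul_single]
      · simp [h, Ne.symm h]
    rw [Finset.sum_congr rfl fun j _ => key j]
    simp

lemma halfShuffle_appendLetter (x y : Tens d) (i : Fin d) :
    halfShuffle x (appendLetter i y) = appendLetter i (shuffle x y) := by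
  induction x using Finsupp.induction_linear with
  | zero => simp
  | add f g hf hg =>
      simp only [halfShuffle_add_left, shuffle_add_left, appendLetter_add, hf, hg]
  | single u a =>
      induction y using Finsupp.induction_linear with
      | zero => simp
      | add f g hf hg =>
          simp only [appendLetter_add, halfShuffle_add_right, shuffle_add_right, hf, hg]
      | single v b =>
          rw [appendLetter_single, halfShuffle_single_single, halfShuffleWord_concat,
            shuffle_single_single, appendLetter_smul]

lemma shuffle_split (x y : Tens d) (hx : x ([] : Word d) = 0) (hy : y ([] : Word d) = 0) :
    shuffle x y = halfShuffle x y + halfShuffle y x := by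
  refine induction_ne_nil
    (P := fun z : Tens d => shuffle z y = halfShuffle z y + halfShuffle y z) ?_ ?_ ?_ x hx
  · simp
  · intro x1 x2 h1 h2
    simp only [shuffle_add_left, halfShuffle_add_left, halfShuffle_add_right, h1, h2]
    abel
  · intro w a hw
    refine induction_ne_nil
      (P := fun z : Tens d => shuffle (Finsupp.single w a) z =
        halfShuffle (Finsupp.single w a) z + halfShuffle z (Finsupp.single w a)) ?_ ?_ ?_ y hy
    · simp
    · intro y1 y2 h1 h2
      simp only [shuffle_add_right, halfShuffle_add_left, halfShuffle_add_right, h1, h2]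
      abel
    · intro v b hv
      rw [shuffle_single_single, halfShuffle_single_single, halfShuffle_single_single,
        shuffleWord_split w v hw hv, smul_add, mul_comm b a]

lemma Tminus_shuffle (j : Fin d) (x y : Tens d) :
    Tminus j (shuffle x y) = shuffle (Tminus j x) y + shuffle x (Tminus j y) := by
  induction x using Finsupp.induction_linear with
  | zero => simp
  | add f g hf hg =>
      simp only [shuffle_add_left, Tminus_add, hf, hg]
      abel
  | single u a =>
      induction y using Finsupp.induction_linear with
      | zero => simp
      | add f g hf hg =>
          simp only [shuffle_add_right, Tminus_add, hf, hg]
          abel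
      | single v b =>
          rw [shuffle_single_single, Tminus_smul, Tminus_single, Tminus_single]
          rcases List.eq_nil_or_concat u with rfl | ⟨u', a', rfl⟩
          · rw [TminusWord_nil, smul_zero, shuffle_zero_left, zero_add, shuffleWord_nil_left,
              Tminus_single, one_smul, shuffle_single_nil_left, smul_smul]
          · rcases List.eq_nil_or_concat v with rfl | ⟨v', b', rfl⟩
            · rw [TminusWord_nil, smul_zero, shuffle_zero_right, add_zero, shuffleWord_nil_right,
                Tminus_single, one_smul, shuffle_single_nil_right, smul_smul, mul_comm b a]
            · simp only [List.concat_eq_append]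
              rw [shuffleWord_concat_concat, Tminus_add, Tminus_appendLetter,
                Tminus_appendLetter, TminusWord_concat, TminusWord_concat]
              split_ifs with h1 h2 h3 <;>
                simp [shuffle_smul_left, shuffle_smul_right, shuffle_single_single,
                  smul_smul, smul_add, mul_comm, mul_left_comm] <;>
                rw [add_comm]

lemma halfShuffle_sum_right {ι : Type*} (x : Tens d) (s : Finset ι) (f : ι → Tens d) :
    halfShuffle x (∑ i ∈ s, f i) = ∑ i ∈ s, halfShuffle x (f i) := by
  simp [halfShuffle_eq]

/-- Mp as a linear map -/
def MpLM (p : PolyMap d m) : Tens m →ₗ[ℝ] Tens d :=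
  Finsupp.lsum ℝ fun w => LinearMap.toSpanSingleton ℝ (Tens d) (MpWord p w)

lemma Mp_eq (p : PolyMap d m) (x : Tens m) : Mp p x = MpLM p x := by
  rw [Mp, MpLM, Finsupp.lsum_apply]
  exact Finsupp.sum_congr fun w _ => by rw [LinearMap.toSpanSingleton_apply]

@[simp] lemma Mp_zero (p : PolyMap d m) : Mp p (0 : Tens m) = 0 := by simp [Mp_eq]
lemma Mp_add (p : PolyMap d m) (x y : Tens m) : Mp p (x + y) = Mp p x + Mp p y := by
  simp [Mp_eq]
lemma Mp_smul (p : PolyMap d m) (c : ℝ) (x : Tens m) : Mp p (c • x) = c • Mp p x := by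
  simp [Mp_eq]
lemma Mp_single (p : PolyMap d m) (w : Word m) (a : ℝ) :
    Mp p (Finsupp.single w a) = a • MpWord p w := by
  simp [Mp_eq, MpLM, Finsupp.lsum_single]

lemma MpWord_nil (p : PolyMap d m) : MpWord p [] = Finsupp.single [] 1 := rfl

lemma MpWord_concat (p : PolyMap d m) (w : Word m) (i : Fin m) :
    MpWord p (w ++ [i]) = ∑ j : Fin d, appendLetter j (shuffle (MpWord p w) (kP p i j)) := by
  rw [MpWord, List.reverse_append]
  show MpRev p (i :: w.reverse) = _
  rw [MpRev]
  rfl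

lemma Mp_appendLetter (p : PolyMap d m) (i : Fin m) (x : Tens m) :
    Mp p (appendLetter i x) = ∑ j : Fin d, appendLetter j (shuffle (Mp p x) (kP p i j)) := by
  induction x using Finsupp.induction_linear with
  | zero => simp
  | add f g hf hg =>
      simp only [appendLetter_add, Mp_add, shuffle_add_left, Finset.sum_add_distrib, hf, hg]
  | single w a =>
      rw [appendLetter_single, Mp_single, MpWord_concat, Mp_single]
      simp only [Finset.smul_sum, appendLetter_smul, shuffle_smul_left]

lemma MpWord_coeff_nil (p : PolyMap d m) (w : Word m) (hw : w ≠ []) :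
    MpWord p w ([] : Word d) = 0 := by
  rcases (List.eq_nil_or_concat w).resolve_left hw with ⟨w', i, rfl⟩
  simp only [List.concat_eq_append, MpWord_concat]
  rw [Finset.sum_apply']
  refine Finset.sum_eq_zero fun j _ => ?_
  refine Finsupp.mapDomain_notin_range _ _ ?_
  rintro ⟨t, ht⟩
  simp at ht

lemma Mp_coeff_nil (p : PolyMap d m) (x : Tens m) (hx : x ([] : Word m) = 0) :
    Mp p x ([] : Word d) = 0 := by
  refine induction_ne_nil (P := fun z : Tens m => Mp p z ([] : Word d) = 0) ?_ ?_ ?_ x hx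
  · simp
  · intro x1 x2 h1 h2; rw [Mp_add, Finsupp.add_apply, h1, h2, add_zero]
  · intro w a hw
    rw [Mp_single, Finsupp.smul_apply, MpWord_coeff_nil p w hw, smul_zero]

lemma Mp_halfShuffleWord (p : PolyMap d m) :
    ∀ (n : ℕ) (u v : Word m), u ≠ [] → v ≠ [] → u.length + v.length ≤ n →
      Mp p (halfShuffleWord u v) = halfShuffle (MpWord p u) (MpWord p v) := by
  intro n
  induction n with
  | zero =>
      intro u v hu hv h
      exfalso
      have := List.length_pos_iff.mpr hu
      omega
  | succ n ih =>
      have SH : ∀ u v : Word m, u.length + v.length ≤ n →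
          Mp p (shuffleWord u v) = shuffle (MpWord p u) (MpWord p v) := by
        intro u v h
        rcases eq_or_ne u [] with rfl | hu
        · rw [shuffleWord_nil_left, MpWord_nil, shuffle_empty_left, Mp_single, one_smul]
        rcases eq_or_ne v [] with rfl | hv
        · rw [shuffleWord_nil_right, MpWord_nil, shuffle_empty_right, Mp_single, one_smul]
        have h1 : u.length + v.length ≤ n := h
        rw [shuffleWord_split u v hu hv, Mp_add, ih u v hu hv h1,
          ih v u hv hu (by omega),
          shuffle_split (MpWord p u) (MpWord p v) (MpWord_coeff_nil p u hu)
            (MpWord_coeff_nil p v hv)]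
      intro u v hu hv hlen
      rcases (List.eq_nil_or_concat v).resolve_left hv with ⟨v', i, rfl⟩
      simp only [List.concat_eq_append] at hlen ⊢
      have hlen' : u.length + v'.length ≤ n := by
        simp only [List.length_append, List.length_cons, List.length_nil] at hlen
        omega
      rw [halfShuffleWord_concat, Mp_appendLetter, SH u v' hlen', MpWord_concat,
        halfShuffle_sum_right]
      refine Finset.sum_congr rfl fun j _ => ?_
      rw [halfShuffle_appendLetter, shuffle_assoc]

lemma Mp_halfShuffle (p : PolyMap d m) (x y : Tens m)
    (hx : x ([] : Word m) = 0) (hy : y ([] : Word m) = 0) :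
    Mp p (halfShuffle x y) = halfShuffle (Mp p x) (Mp p y) := by
  refine induction_ne_nil
    (P := fun z : Tens m => Mp p (halfShuffle z y) = halfShuffle (Mp p z) (Mp p y)) ?_ ?_ ?_ x hx
  · simp
  · intro x1 x2 h1 h2
    rw [halfShuffle_add_left, Mp_add, h1, h2, Mp_add, halfShuffle_add_left]
  · intro w a hw
    refine induction_ne_nil
      (P := fun z : Tens m => Mp p (halfShuffle (Finsupp.single w a) z) =
        halfShuffle (Mp p (Finsupp.single w a)) (Mp p z)) ?_ ?_ ?_ y hy
    · simp
    · intro y1 y2 h1 h2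
      rw [halfShuffle_add_right, Mp_add, h1, h2, Mp_add, halfShuffle_add_right]
    · intro v b hv
      rw [halfShuffle_single_single, Mp_smul, Mp_single, Mp_single,
        Mp_halfShuffleWord p (w.length + v.length) w v hw hv le_rfl,
        halfShuffle_smul_left, halfShuffle_smul_right, smul_smul]

lemma phi_def (f : MvPolynomial (Fin d) ℝ) : phi f = (AddMonoidAlgebra.coeff f).sum fun t a => a • phiMon t := rfl

lemma phi_add (f g : MvPolynomial (Fin d) ℝ) : phi (f + g) = phi f + phi g := by
  rw [phi_def, phi_def, phi_def, AddMonoidAlgebra.coeff_add]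
  exact Finsupp.sum_add_index' (fun t => zero_smul ℝ (phiMon t))
    (fun t a b => add_smul a b (phiMon t))

lemma phi_monomial (t : Fin d →₀ ℕ) (c : ℝ) :
    phi (MvPolynomial.monomial t c) = c • phiMon t := by
  rw [phi_def]
  show Finsupp.sum (Finsupp.single t c) (fun t a => a • phiMon t) = c • phiMon t
  exact Finsupp.sum_single_index (zero_smul ℝ (phiMon t))

lemma shuffleWord_coeff_nil (u v : Word d) :
    shuffleWord u v ([] : Word d) = if u = [] ∧ v = [] then 1 else 0 := by
  match u, v with
  | [], [] => simp [shuffleWord_nil_left]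
  | [], b::v => simp [shuffleWord_nil_left, Finsupp.single_apply]
  | a::u, [] => simp [shuffleWord_nil_right, Finsupp.single_apply]
  | a::u, b::v =>
      rw [shuffleWord_cons_cons, Finsupp.add_apply,
        Finsupp.mapDomain_notin_range _ _ (by rintro ⟨t, ht⟩; simp at ht),
        Finsupp.mapDomain_notin_range _ _ (by rintro ⟨t, ht⟩; simp at ht)]
      simp

lemma shuffle_coeff_nil (x y : Tens d) :
    shuffle x y ([] : Word d) = x ([] : Word d) * y ([] : Word d) := by
  induction x using Finsupp.induction_linear with
  | zero => simp
  | add f g hf hg => simp only [shuffle_add_left, Finsupp.add_apply, hf, hg]; ring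
  | single u a =>
      induction y using Finsupp.induction_linear with
      | zero => simp
      | add f g hf hg => simp only [shuffle_add_right, Finsupp.add_apply, hf, hg]; ring
      | single v b =>
          rw [shuffle_single_single, Finsupp.smul_apply, shuffleWord_coeff_nil,
            Finsupp.single_apply, Finsupp.single_apply]
          split_ifs with h h1 h2 h2 h1 <;> simp_all <;> ring

lemma shufflePow_coeff_nil (i : Fin d) (n : ℕ) :
    shufflePow (letterT i) n ([] : Word d) = if n = 0 then 1 else 0 := by
  induction n with
  | zero => simp [shufflePow]
  | succ k ih =>
      rw [shufflePow, shuffle_coeff_nil]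
      simp [letterT, Finsupp.single_apply]

lemma shuffleList_coeff_nil (L : List (Tens d)) :
    shuffleList L ([] : Word d) = (L.map fun z => z ([] : Word d)).prod := by
  induction L with
  | nil => simp [shuffleList]
  | cons x xs ih => rw [shuffleList, shuffle_coeff_nil, ih, List.map_cons, List.prod_cons]

lemma phiMon_coeff_nil (t : Fin d →₀ ℕ) :
    phiMon t ([] : Word d) = if t = 0 then 1 else 0 := by
  rw [phiMon, shuffleList_coeff_nil, List.map_map]
  have : ((List.finRange d).map
      ((fun z : Tens d => z ([] : Word d)) ∘ fun i => shufflePow (letterT i) (t i))).prod =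
      ∏ i : Fin d, (if t i = 0 then (1:ℝ) else 0) := by
    rw [Fin.prod_univ_def]
    congr 1
    refine List.map_congr_left fun i _ => ?_
    simp [shufflePow_coeff_nil]
  rw [this]
  by_cases ht : t = 0
  · subst ht; simp
  · rw [if_neg ht]
    obtain ⟨i, hi⟩ : ∃ i, t i ≠ 0 := by
      by_contra h
      push_neg at h
      exact ht (Finsupp.ext h)
    exact Finset.prod_eq_zero (Finset.mem_univ i) (if_neg hi)

lemma phi_coeff_nil (f : MvPolynomial (Fin d) ℝ) :
    phi f ([] : Word d) = MvPolynomial.coeff 0 f := by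
  classical
  rw [phi_def, Finsupp.sum_apply]
  have : ((AddMonoidAlgebra.coeff f).sum fun t a => (a • phiMon t) ([] : Word d)) =
      (AddMonoidAlgebra.coeff f).sum fun t a => if 0 = t then a else 0 := by
    refine Finsupp.sum_congr fun t _ => ?_
    rw [Finsupp.smul_apply, phiMon_coeff_nil, smul_eq_mul]
    by_cases ht : t = 0
    · subst ht; simp
    · simp [ht, Ne.symm ht]
  rw [this, Finsupp.sum_ite_eq]
  split_ifs with h
  · rfl
  · exact ((Finsupp.notMem_support_iff.mp h).symm : (0:ℝ) = _)

lemma letterT_concat (i : Fin d) : letterT i = Finsupp.single (([] : Word d) ++ [i]) 1 := rfl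

lemma Tminus_letterT (j i : Fin d) :
    Tminus j (letterT i) = if i = j then Finsupp.single ([] : Word d) 1 else 0 := by
  rw [letterT_concat, Tminus_single, TminusWord_concat, one_smul]

lemma Tminus_shufflePow (j i : Fin d) (n : ℕ) :
    Tminus j (shufflePow (letterT i) n) =
      if i = j then (n : ℝ) • shufflePow (letterT i) (n - 1) else 0 := by
  induction n with
  | zero =>
      rw [shufflePow, Tminus_single, TminusWord_nil, smul_zero]
      split_ifs <;> simp
  | succ k ih =>
      rw [shufflePow, Tminus_shuffle, ih, Tminus_letterT]
      by_cases h : i = j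
      · subst h
        rw [if_pos rfl, if_pos rfl, if_pos rfl, shuffle_smul_left, shuffle_single_nil_right,
          one_smul]
        cases k with
        | zero => simp [shufflePow]
        | succ l =>
            show ((l+1 : ℕ) : ℝ) • shuffle (shufflePow (letterT i) (l + 1 - 1)) (letterT i) +
              shufflePow (letterT i) (l+1) = _
            rw [Nat.add_sub_cancel, ← shufflePow, Nat.add_sub_cancel]
            rw [← one_smul ℝ (shufflePow (letterT i) (l+1)), smul_smul, ← add_smul]
            norm_num
      · rw [if_neg h, if_neg h, if_neg h, shuffle_zero_left, shuffle_zero_right, add_zero]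

lemma Tminus_shuffleList_aux (j : Fin d) (F G : Fin d → Tens d) (c : ℝ)
    (hF0 : ∀ i, i ≠ j → Tminus j (F i) = 0) (hFG : ∀ i, i ≠ j → G i = F i)
    (hj : Tminus j (F j) = c • G j) (l : List (Fin d)) (hcount : l.count j ≤ 1) :
    Tminus j (shuffleList (l.map F)) = (if j ∈ l then c else 0) • shuffleList (l.map G) := by
  induction l with
  | nil =>
      rw [List.map_nil, shuffleList, Tminus_single, TminusWord_nil, smul_zero]
      simp
  | cons i l ih =>
      rw [List.map_cons, shuffleList, Tminus_shuffle]
      by_cases hij : i = j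
      · subst hij
        have hcount0 : l.count i = 0 := by
          rw [List.count_cons_self] at hcount; omega
        have hnotmem : i ∉ l := List.count_eq_zero.mp hcount0
        have hmapeq : l.map F = l.map G :=
          List.map_congr_left fun x hx => (hFG x (fun he => hnotmem (he ▸ hx))).symm
        rw [ih (by omega), hj, if_neg hnotmem, zero_smul, shuffle_zero_right, add_zero,
          shuffle_smul_left, hmapeq, if_pos (List.mem_cons_self (a := i) (l := l))]
        rw [List.map_cons, shuffleList]
      · have hcount' : l.count j ≤ 1 := by
          rw [List.count_cons_of_ne hij] at hcount; exact hcount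
        have hmem : (if j ∈ i :: l then c else 0) = if j ∈ l then c else 0 := by
          by_cases hm : j ∈ l <;> simp [List.mem_cons, Ne.symm hij, hm]
        rw [hF0 i hij, shuffle_zero_left, zero_add, ih hcount', shuffle_smul_right,
          ← hFG i hij, List.map_cons, shuffleList, hmem]

lemma Tminus_phiMon (j : Fin d) (t : Fin d →₀ ℕ) :
    Tminus j (phiMon t) = ((t j : ℝ)) • phiMon (t - Finsupp.single j 1) := by
  have key := Tminus_shuffleList_aux j
    (fun i => shufflePow (letterT i) (t i))
    (fun i => shufflePow (letterT i) (((t - Finsupp.single j 1) : Fin d →₀ ℕ) i)) ((t j : ℝ))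
    (fun i hij => by rw [Tminus_shufflePow, if_neg hij])
    (fun i hij => by
      show shufflePow (letterT i) (((t - Finsupp.single j 1) : Fin d →₀ ℕ) i) =
        shufflePow (letterT i) (t i)
      rw [Finsupp.tsub_apply, Finsupp.single_apply, if_neg (Ne.symm hij), Nat.sub_zero])
    (by
      show Tminus j (shufflePow (letterT j) (t j)) =
        (t j : ℝ) • shufflePow (letterT j) (((t - Finsupp.single j 1) : Fin d →₀ ℕ) j)
      rw [Tminus_shufflePow, if_pos rfl, Finsupp.tsub_apply, Finsupp.single_eq_same])
    (List.finRange d)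
    (List.nodup_iff_count_le_one.mp (List.nodup_finRange d) j)
  rw [phiMon, phiMon, key, if_pos (List.mem_finRange j)]

lemma phi_pderiv (j : Fin d) (f : MvPolynomial (Fin d) ℝ) :
    phi (MvPolynomial.pderiv j f) = Tminus j (phi f) := by
  induction f using MvPolynomial.induction_on' with
  | monomial t c =>
      rw [MvPolynomial.pderiv_monomial, phi_monomial, phi_monomial, Tminus_smul, Tminus_phiMon,
        smul_smul]
  | add f g hf hg => rw [map_add, phi_add, phi_add, Tminus_add, hf, hg]

lemma Mp_letter (p : PolyMap d m) (hp : ∀ i, MvPolynomial.eval (0 : Fin d → ℝ) (p i) = 0)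
    (i : Fin m) : Mp p (wordT [i]) = phi (p i) := by
  rw [wordT, Mp_single, one_smul]
  have h1 : MpWord p [i] = ∑ j : Fin d, appendLetter j (kP p i j) := by
    have h : ([i] : Word m) = [] ++ [i] := rfl
    rw [h, MpWord_concat, MpWord_nil]
    exact Finset.sum_congr rfl fun j _ => by rw [shuffle_empty_left]
  rw [h1, Finset.sum_congr rfl fun j (_ : j ∈ Finset.univ) => by rw [kP, phi_pderiv]]
  apply sum_appendLetter_Tminus
  rw [phi_coeff_nil]
  have h0 := hp i
  rw [MvPolynomial.eval_zero, MvPolynomial.constantCoeff_eq] at h0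
  exact h0

lemma N_word (p : PolyMap d m) (hp : ∀ i, MvPolynomial.eval (0 : Fin d → ℝ) (p i) = 0)
    (N : Tens m →ₗ[ℝ] Tens d)
    (hN1 : ∀ x y : Tens m, x ([] : Word m) = 0 → y ([] : Word m) = 0 →
      N (halfShuffle x y) = halfShuffle (N x) (N y))
    (hN2 : ∀ i : Fin m, N (wordT [i]) = phi (p i)) :
    ∀ (n : ℕ) (w : Word m), w ≠ [] → w.length ≤ n → N (wordT w) = Mp p (wordT w) := by
  intro n
  induction n with
  | zero =>
      intro w hw h
      exfalso
      have := List.length_pos_iff.mpr hw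
      omega
  | succ n ih =>
      intro w hw hlen
      rcases (List.eq_nil_or_concat w).resolve_left hw with ⟨w', i, rfl⟩
      simp only [List.concat_eq_append] at hlen ⊢
      rcases eq_or_ne w' [] with rfl | hw'
      · simp only [List.nil_append]
        rw [hN2 i, Mp_letter p hp i]
      · have hws : wordT (w' ++ [i]) = halfShuffle (wordT w') (wordT [i]) := by
          rw [wordT, wordT, wordT, halfShuffle_single_single, one_mul, one_smul]
          have h : ([i] : Word m) = [] ++ [i] := rfl
          rw [h, halfShuffleWord_concat, shuffleWord_nil_right, appendLetter_single]
          simp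
        have hc1 : (wordT w' : Tens m) ([] : Word m) = 0 := by
          rw [wordT, Finsupp.single_apply, if_neg hw']
        have hc2 : (wordT [i] : Tens m) ([] : Word m) = 0 := by
          rw [wordT, Finsupp.single_apply]
          simp
        have hlen' : w'.length ≤ n := by
          simp only [List.length_append, List.length_cons, List.length_nil] at hlen
          omega
        rw [hws, hN1 _ _ hc1 hc2, hN2 i, ← Mp_letter p hp i, ih w' hw' hlen',
          ← Mp_halfShuffle p _ _ hc1 hc2, ← hws]

/-- For a polynomial map `p` with `p(0) = 0`, the restriction of `M_p` to
`T^{≥1}(ℝ^m)` is a half-shuffle (Zinbiel) homomorphism with `M_p(i) = φ_d(p_i)`, and it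
is the unique such half-shuffle homomorphism. -/
theorem Mp_halfShuffle_hom (d m : ℕ) (p : PolyMap d m)
    (hp : ∀ i, MvPolynomial.eval (0 : Fin d → ℝ) (p i) = 0) :
    (∀ x y : Tens m, x ([] : Word m) = 0 → y ([] : Word m) = 0 →
        Mp p (halfShuffle x y) = halfShuffle (Mp p x) (Mp p y)) ∧
    (∀ i : Fin m, Mp p (wordT [i]) = phi (p i)) ∧
    (∀ N : Tens m →ₗ[ℝ] Tens d,
        (∀ x y : Tens m, x ([] : Word m) = 0 → y ([] : Word m) = 0 →
          N (halfShuffle x y) = halfShuffle (N x) (N y)) →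
        (∀ i : Fin m, N (wordT [i]) = phi (p i)) →
        ∀ x : Tens m, x ([] : Word m) = 0 → N x = Mp p x) := by
  refine ⟨fun x y hx hy => Mp_halfShuffle p x y hx hy, fun i => Mp_letter p hp i, ?_⟩
  intro N hN1 hN2 x hx
  refine induction_ne_nil (P := fun z : Tens m => N z = Mp p z) ?_ ?_ ?_ x hx
  · show N 0 = Mp p 0
    rw [map_zero, Mp_zero]
  · intro a b ha hb
    rw [map_add, Mp_add, ha, hb]
  · intro w a hw
    show N (Finsupp.single w a) = Mp p (Finsupp.single w a)
    rw [single_eq_smul_wordT, _root_.map_smul, Mp_smul,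
      N_word p hp N hN1 hN2 w.length w hw le_rfl]


end SigPaper
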